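/- arXiv:1505.02719 — 6 statements merged into one kernel-verified Lean document; each statement's English description precedes it below -/
import Mathlib

section
/- Let A, B be bounded operators on a complex Hilbert space and suppose B is positive with (unique positive) square root P. Then σ(AB) = σ(BA) = σ(PAP). -/
variable {H : Type*} [NormedAddCommGroup H] [InnerProductSpace ℂ H] [CompleteSpace H]

open scoped NNReal InnerProductSpace

open ContinuousLinearMap in
/-- If `T` is self-adjoint and `X * T` is a unit for some `X`, then `T` is a unit. -/
lemma isUnit_of_isSelfAdjoint_of_isUnit_mul (T X : H →L[ℂ] H) (hT : IsSelfAdjoint T)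
    (h : IsUnit (X * T)) : IsUnit T := by
  obtain ⟨u, hu⟩ := h
  have hbound : ∀ x, ‖x‖ ≤ (‖(↑u⁻¹ : H →L[ℂ] H)‖₊ * ‖X‖₊ : ℝ≥0) * ‖T x‖ := by
    intro x
    have hx : x = (↑u⁻¹ : H →L[ℂ] H) (X (T x)) := by
      have : (↑u⁻¹ * ↑u : H →L[ℂ] H) x = x := by rw [u.inv_mul]; rfl
      calc x = (↑u⁻¹ * ↑u : H →L[ℂ] H) x := this.symm
        _ = (↑u⁻¹ : H →L[ℂ] H) ((X * T) x) := by rw [hu]; rfl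
        _ = (↑u⁻¹ : H →L[ℂ] H) (X (T x)) := rfl
    calc ‖x‖ = ‖(↑u⁻¹ : H →L[ℂ] H) (X (T x))‖ := by rw [← hx]
      _ ≤ ‖(↑u⁻¹ : H →L[ℂ] H)‖ * ‖X (T x)‖ := le_opNorm _ _
      _ ≤ ‖(↑u⁻¹ : H →L[ℂ] H)‖ * (‖X‖ * ‖T x‖) :=
          mul_le_mul_of_nonneg_left (le_opNorm _ _) (norm_nonneg _)
      _ = (‖(↑u⁻¹ : H →L[ℂ] H)‖₊ * ‖X‖₊ : ℝ≥0) * ‖T x‖ := by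
          push_cast [coe_nnnorm]; ring
  have h_anti : AntilipschitzWith (‖(↑u⁻¹ : H →L[ℂ] H)‖₊ * ‖X‖₊) T :=
    T.antilipschitz_of_bound hbound
  rw [isUnit_iff_bijective, bijective_iff_dense_range_and_antilipschitz]
  refine ⟨?_, ⟨_, h_anti⟩⟩
  have _inst := h_anti.completeSpace_range_clm
  rw [Submodule.topologicalClosure_eq_top_iff, Submodule.eq_bot_iff]
  intro x hx
  have hTx : T x = 0 := by
    rw [← inner_self_eq_zero (𝕜 := ℂ) (x := T x)]
    have h1 : ⟪T (T x), x⟫_ℂ = 0 := hx (T (T x)) ⟨T x, rfl⟩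
    calc ⟪T x, T x⟫_ℂ = ⟪T (T x), x⟫_ℂ :=
          ((isSelfAdjoint_iff_isSymmetric.mp hT) (T x) x).symm
      _ = 0 := h1
  exact h_anti.injective (by simpa using hTx)

theorem stmt_4 (A B P : H →L[ℂ] H) (hB : B.IsPositive) (hP : P.IsPositive)
    (hP2 : P * P = B) :
    spectrum ℂ (A * B) = spectrum ℂ (B * A) ∧
      spectrum ℂ (B * A) = spectrum ℂ (P * A * P) := by
  have hBsa : IsSelfAdjoint B := hB.isSelfAdjoint
  have hPsa : IsSelfAdjoint P := hP.isSelfAdjoint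
  -- Unit equivalences at zero
  have hBP : IsUnit B ↔ IsUnit P := by
    constructor
    · intro h
      exact isUnit_of_isSelfAdjoint_of_isUnit_mul P P hPsa (by rwa [hP2])
    · intro h
      rw [← hP2]; exact h.mul h
  have hAB : IsUnit (A * B) ↔ IsUnit A ∧ IsUnit B := by
    constructor
    · intro h
      have hBu : IsUnit B := isUnit_of_isSelfAdjoint_of_isUnit_mul B A hBsa h
      obtain ⟨v, hv⟩ := hBu
      have heq : A = (A * B) * ↑v⁻¹ := by
        rw [← hv, Units.mul_inv_cancel_right]
      exact ⟨heq ▸ h.mul v⁻¹.isUnit, ⟨v, hv⟩⟩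
    · rintro ⟨h1, h2⟩; exact h1.mul h2
  have hBA : IsUnit (B * A) ↔ IsUnit A ∧ IsUnit B := by
    constructor
    · intro h
      have hst : IsUnit (star (B * A)) := h.star
      rw [star_mul] at hst
      have hBu : IsUnit B := by
        refine isUnit_of_isSelfAdjoint_of_isUnit_mul B (star A) hBsa ?_
        rwa [hBsa.star_eq] at hst
      obtain ⟨v, hv⟩ := hBu
      have heq : A = ↑v⁻¹ * (B * A) := by
        rw [← hv, Units.inv_mul_cancel_left]
      exact ⟨heq ▸ v⁻¹.isUnit.mul h, ⟨v, hv⟩⟩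
    · rintro ⟨h1, h2⟩; exact h2.mul h1
  have hPAP : IsUnit (P * A * P) ↔ IsUnit A ∧ IsUnit B := by
    constructor
    · intro h
      have hPu : IsUnit P := isUnit_of_isSelfAdjoint_of_isUnit_mul P (P * A) hPsa h
      obtain ⟨w, hw⟩ := hPu
      have heq : A = ↑w⁻¹ * (P * A * P) * ↑w⁻¹ := by
        rw [← hw, show ((↑w : H →L[ℂ] H) * A * ↑w) = ↑w * (A * ↑w) from mul_assoc _ _ _,
          Units.inv_mul_cancel_left, Units.mul_inv_cancel_right]
      exact ⟨heq ▸ (w⁻¹.isUnit.mul h).mul w⁻¹.isUnit, hBP.mpr ⟨w, hw⟩⟩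
    · rintro ⟨h1, h2⟩
      have hPu : IsUnit P := hBP.mp h2
      exact (hPu.mul h1).mul hPu
  constructor
  · ext z
    by_cases hz : z = 0
    · subst hz
      simp only [spectrum.zero_mem_iff]
      rw [hAB, hBA]
    · constructor
      · intro hm
        have : z ∈ spectrum ℂ (A * B) \ {0} := ⟨hm, hz⟩
        rw [spectrum.nonzero_mul_comm] at this
        exact this.1
      · intro hm
        have : z ∈ spectrum ℂ (B * A) \ {0} := ⟨hm, hz⟩
        rw [← spectrum.nonzero_mul_comm] at this
        exact this.1
  · ext z
    have key : spectrum ℂ (P * (P * A)) \ {0} = spectrum ℂ ((P * A) * P) \ {0} :=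
      spectrum.nonzero_mul_comm _ _
    have hrw : P * (P * A) = B * A := by rw [← mul_assoc, hP2]
    have hrw2 : (P * A) * P = P * A * P := rfl
    rw [hrw, hrw2] at key
    by_cases hz : z = 0
    · subst hz
      simp only [spectrum.zero_mem_iff]
      rw [hBA, hPAP]
    · constructor
      · intro hm
        have : z ∈ spectrum ℂ (B * A) \ {0} := ⟨hm, hz⟩
        rw [key] at this
        exact this.1
      · intro hm
        have : z ∈ spectrum ℂ (P * A * P) \ {0} := ⟨hm, hz⟩
        rw [← key] at this
        exact this.1
end

section
/- Let A, B be bounded operators on a complex Hilbert space such that at least one of them is normal. Then σ(AB) = σ(BA). -/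
variable {H : Type*} [NormedAddCommGroup H] [InnerProductSpace ℂ H] [CompleteSpace H]

open ContinuousLinearMap in
lemma aux_norm_adjoint (A : H →L[ℂ] H) (hA : IsStarNormal A) (x : H) :
    ‖A x‖ = ‖(ContinuousLinearMap.adjoint A) x‖ := by
  have h1 : adjoint A * A = A * adjoint A := by
    have := hA.star_comm_self
    simpa [star_eq_adjoint] using this.eq
  have key : (inner ℂ (A x) (A x) : ℂ) = inner ℂ ((adjoint A) x) ((adjoint A) x) := by
    calc (inner ℂ (A x) (A x) : ℂ)
        = inner ℂ ((adjoint A) (A x)) x := (adjoint_inner_left A x (A x)).symm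
      _ = inner ℂ ((adjoint A * A) x) x := by rw [ContinuousLinearMap.mul_apply]
      _ = inner ℂ ((A * adjoint A) x) x := by rw [h1]
      _ = inner ℂ (A ((adjoint A) x)) x := by rw [ContinuousLinearMap.mul_apply]
      _ = inner ℂ ((adjoint A) x) ((adjoint A) x) := (adjoint_inner_right A ((adjoint A) x) x).symm
  have h1 := inner_self_eq_norm_sq (𝕜 := ℂ) (A x)
  have h2 := inner_self_eq_norm_sq (𝕜 := ℂ) ((adjoint A) x)
  have : ‖A x‖ ^ 2 = ‖(adjoint A) x‖ ^ 2 := by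
    rw [inner_self_eq_norm_sq_to_K, inner_self_eq_norm_sq_to_K] at key
    exact_mod_cast key
  nlinarith [norm_nonneg (A x), norm_nonneg ((adjoint A) x)]

open ContinuousLinearMap in
lemma aux_unit (A B : H →L[ℂ] H) (hA : IsStarNormal A) (h : IsUnit (A * B)) :
    IsUnit A := by
  rw [ContinuousLinearMap.isUnit_iff_bijective] at h ⊢
  have hsurj : Function.Surjective A := by
    have : Function.Surjective (A * B) := h.surjective
    intro y
    obtain ⟨x, hx⟩ := this y
    exact ⟨B x, hx⟩
  refine ⟨?_, hsurj⟩
  -- A† is injective since A is surjective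
  have hadj_inj : Function.Injective (adjoint A) := by
    intro x y hxy
    have hsub : (adjoint A) (x - y) = 0 := by simp [map_sub, hxy]
    have : ∀ w, (inner ℂ (x - y) w : ℂ) = 0 := by
      intro w
      obtain ⟨v, rfl⟩ := hsurj w
      rw [← adjoint_inner_left A]
      simp [hsub]
    have := inner_self_eq_zero (𝕜 := ℂ) (x := x - y) |>.mp (this (x - y))
    exact sub_eq_zero.mp this
  intro x y hxy
  have : A (x - y) = 0 := by simp [map_sub, hxy]
  have h0 : (adjoint A) (x - y) = 0 := by
    have hn := aux_norm_adjoint A hA (x - y)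
    rw [this, norm_zero] at hn
    exact norm_eq_zero.mp hn.symm
  have : x - y = 0 := by
    have := hadj_inj (a₁ := x - y) (a₂ := 0) (by simpa using h0)
    simpa using this
  exact sub_eq_zero.mp this

lemma aux_swap (A B : H →L[ℂ] H) (h : IsStarNormal A ∨ IsStarNormal B)
    (hu : IsUnit (A * B)) : IsUnit (B * A) := by
  rcases h with hA | hB
  · have h1 : IsUnit A := aux_unit A B hA hu
    have h2 : IsUnit B := by
      have : B = h1.unit⁻¹ * (A * B) := by
        rw [← mul_assoc, IsUnit.val_inv_mul, one_mul]
      rw [this]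
      exact (h1.unit⁻¹.isUnit).mul hu
    exact h2.mul h1
  · have hstar : IsUnit (star B * star A) := by
      have : star B * star A = star (A * B) := by rw [star_mul]
      rw [this]
      exact hu.star
    have hBn : IsStarNormal (star B) := by infer_instance
    have h2 : IsUnit (star B) := aux_unit (star B) (star A) hBn hstar
    have h2' : IsUnit B := by simpa using h2.star
    have h1 : IsUnit A := by
      have : A = (A * B) * h2'.unit⁻¹ := by
        rw [mul_assoc, IsUnit.mul_val_inv, mul_one]
      rw [this]
      exact hu.mul h2'.unit⁻¹.isUnit
    exact h2'.mul h1

theorem stmt_5 (A B : H →L[ℂ] H) (h : IsStarNormal A ∨ IsStarNormal B) :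
    spectrum ℂ (A * B) = spectrum ℂ (B * A) := by
  ext z
  by_cases hz : z = 0
  · subst hz
    rw [spectrum.zero_mem_iff, spectrum.zero_mem_iff]
    constructor
    · intro hAB hBA
      exact hAB (aux_swap B A h.symm hBA)
    · intro hBA hAB
      exact hBA (aux_swap A B h hAB)
  · have := spectrum.nonzero_mul_comm (𝕜 := ℂ) A B
    constructor
    · intro hm
      have : z ∈ spectrum ℂ (A * B) \ {0} := ⟨hm, hz⟩
      rw [spectrum.nonzero_mul_comm] at this
      exact this.1
    · intro hm
      have : z ∈ spectrum ℂ (B * A) \ {0} := ⟨hm, hz⟩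
      rw [spectrum.nonzero_mul_comm] at this
      exact this.1
end

section
/- Let A, B be bounded operators on a complex Hilbert space with A positive and B self-adjoint. If AB is hyponormal, then AB is self-adjoint. -/
open ContinuousLinearMap ComplexConjugate Filter
open scoped InnerProductSpace Topology ENNReal NNReal Pointwise

variable {H : Type*} [NormedAddCommGroup H] [InnerProductSpace ℂ H] [CompleteSpace H]

/-- hyponormality is invariant under subtracting a scalar. -/
lemma hypo_shift (T : H →L[ℂ] H) (hT : ∀ x, ‖(star T) x‖ ≤ ‖T x‖) (γ : ℂ) :
    ∀ x, ‖(star (T - γ • 1)) x‖ ≤ ‖(T - γ • 1) x‖ := by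
  intro x
  have hstar : star (T - γ • 1) = star T - (conj γ) • 1 := by
    simp [star_sub, star_smul]
  have h1 : (T - γ • 1) x = T x - γ • x := by simp [sub_apply, smul_apply]
  have h2 : (star (T - γ • 1)) x = (star T) x - (conj γ) • x := by
    rw [hstar]; simp [sub_apply, smul_apply]
  have e1 : ‖T x - γ • x‖ ^ 2
      = ‖T x‖ ^ 2 - 2 * Complex.re (γ * ⟪T x, x⟫_ℂ) + ‖γ • x‖ ^ 2 := by
    rw [@norm_sub_sq ℂ]
    simp [inner_smul_right]
  have e2 : ‖(star T) x - (conj γ) • x‖ ^ 2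
      = ‖(star T) x‖ ^ 2 - 2 * Complex.re ((conj γ) * ⟪(star T) x, x⟫_ℂ) + ‖(conj γ) • x‖ ^ 2 := by
    rw [@norm_sub_sq ℂ]
    simp [inner_smul_right]
  have e3 : ⟪(star T) x, x⟫_ℂ = conj ⟪T x, x⟫_ℂ := by
    rw [star_eq_adjoint, adjoint_inner_left, inner_conj_symm]
  have e4 : Complex.re ((conj γ) * ⟪(star T) x, x⟫_ℂ) = Complex.re (γ * ⟪T x, x⟫_ℂ) := by
    rw [e3, ← map_mul, Complex.conj_re]
  have e5 : ‖(conj γ) • x‖ = ‖γ • x‖ := by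
    simp [norm_smul]
  have hx := hT x
  rw [h1, h2]
  have hsq : ‖(star T) x - (conj γ) • x‖ ^ 2 ≤ ‖T x - γ • x‖ ^ 2 := by
    rw [e1, e2, e4, e5]
    nlinarith [norm_nonneg ((star T) x), norm_nonneg (T x)]
  nlinarith [norm_nonneg ((star T) x - (conj γ) • x), norm_nonneg (T x - γ • x)]

/-- the inverse of an invertible hyponormal operator is hyponormal. -/
lemma hypo_inv (S S' : H →L[ℂ] H) (h1 : S * S' = 1) (h2 : S' * S = 1)
    (hS : ∀ x, ‖(star S) x‖ ≤ ‖S x‖) :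
    ∀ x, ‖(star S') x‖ ≤ ‖S' x‖ := by
  intro x
  set C : H →L[ℂ] H := star S * S' with hC
  have hCle : ‖C‖ ≤ 1 := by
    refine opNorm_le_bound _ zero_le_one fun z => ?_
    have : C z = (star S) (S' z) := by simp [hC, mul_apply]
    rw [this, one_mul]
    calc ‖(star S) (S' z)‖ ≤ ‖S (S' z)‖ := hS _
    _ = ‖(S * S') z‖ := by simp [mul_apply]
    _ = ‖z‖ := by rw [h1]; simp
  have hCstar : ‖star C‖ ≤ 1 := by rwa [norm_star]
  have hCstar_eq : star C = star S' * S := by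
    simp [hC, star_mul]
  have hSu : S (S' x) = x := by
    have : (S * S') x = x := by rw [h1]; simp
    simpa [mul_apply] using this
  calc ‖(star S') x‖ = ‖(star S') (S (S' x))‖ := by rw [hSu]
  _ = ‖(star C) (S' x)‖ := by rw [hCstar_eq]; simp [mul_apply]
  _ ≤ ‖star C‖ * ‖S' x‖ := le_opNorm _ _
  _ ≤ 1 * ‖S' x‖ := by gcongr
  _ = ‖S' x‖ := one_mul _

lemma hypo_pow_ineq (R : H →L[ℂ] H) (hR : ∀ x, ‖(star R) x‖ ≤ ‖R x‖) (n : ℕ) (x : H) :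
    ‖(R ^ (n + 1)) x‖ ^ 2 ≤ ‖(R ^ (n + 2)) x‖ * ‖(R ^ n) x‖ := by
  have key : (⟪(R ^ (n+1)) x, (R ^ (n+1)) x⟫_ℂ) = ⟪R ((R ^ n) x), (R ^ (n+1)) x⟫_ℂ := by
    congr 1
    rw [pow_succ']
    simp [mul_apply]
  have e1 : ‖(R ^ (n+1)) x‖ ^ 2 = ‖(⟪(R ^ (n+1)) x, (R ^ (n+1)) x⟫_ℂ)‖ := by
    rw [@inner_self_eq_norm_sq_to_K ℂ]
    simp [sq_abs]
  have e2 : (⟪R ((R ^ n) x), (R ^ (n+1)) x⟫_ℂ) = ⟪(R ^ n) x, (adjoint R) ((R ^ (n+1)) x)⟫_ℂ :=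
    (adjoint_inner_right R _ _).symm
  have e3 : ‖(adjoint R) ((R ^ (n+1)) x)‖ ≤ ‖(R ^ (n+2)) x‖ := by
    have := hR ((R ^ (n+1)) x)
    rw [star_eq_adjoint] at this
    calc ‖(adjoint R) ((R ^ (n+1)) x)‖ ≤ ‖R ((R ^ (n+1)) x)‖ := this
    _ = ‖(R ^ (n+2)) x‖ := by
        conv_rhs => rw [pow_succ']
        simp [mul_apply]
  calc ‖(R ^ (n+1)) x‖ ^ 2 = ‖(⟪(R ^ n) x, (adjoint R) ((R ^ (n+1)) x)⟫_ℂ)‖ := by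
        rw [e1, key, e2]
  _ ≤ ‖(R ^ n) x‖ * ‖(adjoint R) ((R ^ (n+1)) x)‖ := norm_inner_le_norm _ _
  _ ≤ ‖(R ^ n) x‖ * ‖(R ^ (n+2)) x‖ := by gcongr
  _ = ‖(R ^ (n+2)) x‖ * ‖(R ^ n) x‖ := mul_comm _ _

lemma hypo_opnorm_ineq (R : H →L[ℂ] H) (hR : ∀ x, ‖(star R) x‖ ≤ ‖R x‖) (n : ℕ) :
    ‖R ^ (n + 1)‖ ^ 2 ≤ ‖R ^ (n + 2)‖ * ‖R ^ n‖ := by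
  set c : ℝ := Real.sqrt (‖R ^ (n + 2)‖ * ‖R ^ n‖) with hc
  have hcnn : 0 ≤ c := Real.sqrt_nonneg _
  have hcsq : c ^ 2 = ‖R ^ (n + 2)‖ * ‖R ^ n‖ := by
    rw [hc, sq, Real.mul_self_sqrt (by positivity)]
  have hb : ‖R ^ (n + 1)‖ ≤ c := by
    refine opNorm_le_bound _ hcnn fun x => ?_
    have h1 := hypo_pow_ineq R hR n x
    have h2 : ‖(R ^ (n+2)) x‖ ≤ ‖R ^ (n+2)‖ * ‖x‖ := le_opNorm _ _
    have h3 : ‖(R ^ n) x‖ ≤ ‖R ^ n‖ * ‖x‖ := le_opNorm _ _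
    have hkey : ‖(R ^ (n+1)) x‖ ^ 2 ≤ (c * ‖x‖) ^ 2 := by
      calc ‖(R ^ (n+1)) x‖ ^ 2 ≤ ‖(R ^ (n+2)) x‖ * ‖(R ^ n) x‖ := h1
      _ ≤ (‖R ^ (n+2)‖ * ‖x‖) * (‖R ^ n‖ * ‖x‖) :=
          mul_le_mul h2 h3 (norm_nonneg _) (by positivity)
      _ = (‖R ^ (n+2)‖ * ‖R ^ n‖) * ‖x‖ ^ 2 := by ring
      _ = (c * ‖x‖) ^ 2 := by rw [← hcsq]; ring
    nlinarith [norm_nonneg ((R ^ (n+1)) x), mul_nonneg hcnn (norm_nonneg x), hkey]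
  calc ‖R ^ (n + 1)‖ ^ 2 ≤ c ^ 2 := by nlinarith [norm_nonneg (R ^ (n+1))]
  _ = _ := hcsq

lemma hypo_norm_pow [Nontrivial H] (R : H →L[ℂ] H) (hR : ∀ x, ‖(star R) x‖ ≤ ‖R x‖) (n : ℕ) :
    ‖R ^ n‖ = ‖R‖ ^ n := by
  rcases eq_or_lt_of_le (norm_nonneg R) with h0 | h0
  · have hR0 : R = 0 := by rw [← norm_eq_zero]; exact h0.symm
    cases n with
    | zero => simp
    | succ m => rw [hR0]; simp [zero_pow]
  · refine le_antisymm (norm_pow_le _ _) ?_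
    have key : ∀ n : ℕ, ‖R‖ ^ n ≤ ‖R ^ n‖ ∧ ‖R‖ ^ (n + 1) ≤ ‖R ^ (n + 1)‖ := by
      intro n
      induction n with
      | zero => constructor <;> simp
      | succ m ih =>
        obtain ⟨ihm, ihm1⟩ := ih
        refine ⟨ihm1, ?_⟩
        have h1 := hypo_opnorm_ineq R hR m
        have h2 : ‖R ^ m‖ ≤ ‖R‖ ^ m := norm_pow_le _ _
        have h3 : (‖R‖ ^ (m + 1)) ^ 2 ≤ ‖R ^ (m + 2)‖ * ‖R‖ ^ m := by
          calc (‖R‖ ^ (m + 1)) ^ 2 ≤ ‖R ^ (m + 1)‖ ^ 2 := by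
                have := pow_le_pow_left₀ (by positivity) ihm1 2
                simpa using this
          _ ≤ ‖R ^ (m + 2)‖ * ‖R ^ m‖ := h1
          _ ≤ ‖R ^ (m + 2)‖ * ‖R‖ ^ m := by gcongr
        have hpos : (0:ℝ) < ‖R‖ ^ m := by positivity
        have h4 : ‖R‖ ^ (m + 2) * ‖R‖ ^ m ≤ ‖R ^ (m + 2)‖ * ‖R‖ ^ m := by
          calc ‖R‖ ^ (m + 2) * ‖R‖ ^ m = (‖R‖ ^ (m + 1)) ^ 2 := by ring
          _ ≤ ‖R ^ (m + 2)‖ * ‖R‖ ^ m := h3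
        exact le_of_mul_le_mul_right h4 hpos
    exact (key n).1

lemma hypo_spectralRadius [Nontrivial H] (R : H →L[ℂ] H) (hR : ∀ x, ‖(star R) x‖ ≤ ‖R x‖) :
    spectralRadius ℂ R = (‖R‖₊ : ℝ≥0∞) := by
  have htendsto := spectrum.pow_nnnorm_pow_one_div_tendsto_nhds_spectralRadius R
  have hconst : Tendsto (fun _ : ℕ => (‖R‖₊ : ℝ≥0∞)) atTop (𝓝 (‖R‖₊ : ℝ≥0∞)) :=
    tendsto_const_nhds
  have heq : ∀ᶠ n : ℕ in atTop, (‖R ^ n‖₊ : ℝ≥0∞) ^ (1 / n : ℝ) = (‖R‖₊ : ℝ≥0∞) := by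
    filter_upwards [eventually_ge_atTop 1] with n hn
    have h1 : ‖R ^ n‖₊ = ‖R‖₊ ^ n := by
      ext
      push_cast
      exact hypo_norm_pow R hR n
    rw [h1, ENNReal.coe_pow, ← ENNReal.rpow_natCast ((‖R‖₊ : ℝ≥0∞)) n, ← ENNReal.rpow_mul]
    rw [mul_one_div, div_self (by exact_mod_cast Nat.one_le_iff_ne_zero.mp hn), ENNReal.rpow_one]
  exact tendsto_nhds_unique (htendsto.congr' heq) hconst

lemma key_resolvent [Nontrivial H] (T : H →L[ℂ] H) (hT : ∀ x, ‖(star T) x‖ ≤ ‖T x‖)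
    (hσ : ∀ z ∈ spectrum ℂ T, z.im = 0) (γ : ℂ) (hγ : γ.im ≠ 0) (y : H) :
    |γ.im| * ‖y‖ ≤ ‖(T - γ • 1) y‖ := by
  have hnot : γ ∉ spectrum ℂ T := fun h => hγ (hσ γ h)
  have hUnit : IsUnit (algebraMap ℂ (H →L[ℂ] H) γ - T) := spectrum.notMem_iff.mp hnot
  have halg : algebraMap ℂ (H →L[ℂ] H) γ = γ • 1 := Algebra.algebraMap_eq_smul_one γ
  have hS_eq : T - γ • 1 = -(algebraMap ℂ (H →L[ℂ] H) γ - T) := by rw [halg, neg_sub]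
  have hUS : IsUnit (T - γ • 1) := by rw [hS_eq]; exact hUnit.neg
  obtain ⟨u, hu⟩ := hUS
  set S : H →L[ℂ] H := T - γ • 1 with hSdef
  set S' : H →L[ℂ] H := ↑u⁻¹ with hS'def
  have h1 : S * S' = 1 := by rw [← hu, hS'def]; exact_mod_cast u.mul_inv
  have h2 : S' * S = 1 := by rw [← hu, hS'def]; exact_mod_cast u.inv_mul
  have hypoS : ∀ x, ‖(star S) x‖ ≤ ‖S x‖ := hypo_shift T hT γ
  have hypoS' : ∀ x, ‖(star S') x‖ ≤ ‖S' x‖ := hypo_inv S S' h1 h2 hypoS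
  set c : ℝ≥0 := (|γ.im|⁻¹).toNNReal with hc
  have hccoe : (c : ℝ) = |γ.im|⁻¹ := Real.coe_toNNReal _ (by positivity)
  have hbound : ∀ μ ∈ spectrum ℂ S', ‖μ‖₊ ≤ c := by
    intro μ hμ
    have hμ0 : μ ≠ 0 := by
      intro h
      rw [h] at hμ
      exact spectrum.zero_notMem ℂ u⁻¹.isUnit hμ
    have hinv : μ⁻¹ ∈ spectrum ℂ S := by
      have := (spectrum.inv_mem_iff (r := Units.mk0 μ hμ0) (a := u⁻¹)).mp (by simpa using hμ)
      simpa [hu] using this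
    have hmem : μ⁻¹ ∈ spectrum ℂ T - ({γ} : Set ℂ) := by
      rw [spectrum.sub_singleton_eq, halg]
      exact hinv
    obtain ⟨t, ht, g, hg, htg⟩ := Set.mem_sub.mp hmem
    rw [Set.mem_singleton_iff] at hg
    rw [hg] at htg
    have him : (μ⁻¹).im = -γ.im := by
      rw [← htg, Complex.sub_im, hσ t ht, zero_sub]
    have hninv : |γ.im| ≤ ‖μ⁻¹‖ := by
      calc |γ.im| = |(μ⁻¹).im| := by rw [him, abs_neg]
      _ ≤ ‖μ⁻¹‖ := Complex.abs_im_le_norm _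
      _ = ‖μ⁻¹‖ := rfl
    have hnorm : ‖μ‖ ≤ (c : ℝ) := by
      rw [hccoe]
      have h3 : ‖μ‖ = ‖μ⁻¹‖⁻¹ := by rw [norm_inv, inv_inv]
      rw [h3]
      exact inv_anti₀ (abs_pos.mpr hγ) hninv
    exact_mod_cast hnorm
  have hrad : spectralRadius ℂ S' ≤ (c : ℝ≥0∞) := by
    rw [spectralRadius]
    exact iSup₂_le fun μ hμ => by exact_mod_cast hbound μ hμ
  have hnn : (‖S'‖₊ : ℝ≥0∞) ≤ (c : ℝ≥0∞) := by
    rw [← hypo_spectralRadius S' hypoS']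
    exact hrad
  have hnorm' : ‖S'‖ ≤ (c : ℝ) := by exact_mod_cast hnn
  have hy : ‖y‖ ≤ ‖S'‖ * ‖S y‖ := by
    have : S' (S y) = y := by
      have := congrArg (fun f : H →L[ℂ] H => f y) h2
      simpa [mul_apply] using this
    calc ‖y‖ = ‖S' (S y)‖ := by rw [this]
    _ ≤ ‖S'‖ * ‖S y‖ := le_opNorm _ _
  have hpos : (0:ℝ) < |γ.im| := abs_pos.mpr hγ
  have : ‖y‖ ≤ |γ.im|⁻¹ * ‖S y‖ := by
    calc ‖y‖ ≤ ‖S'‖ * ‖S y‖ := hy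
    _ ≤ (c:ℝ) * ‖S y‖ := by gcongr
    _ = |γ.im|⁻¹ * ‖S y‖ := by rw [hccoe]
  calc |γ.im| * ‖y‖ ≤ |γ.im| * (|γ.im|⁻¹ * ‖S y‖) := by gcongr
  _ = ‖S y‖ := by field_simp

lemma spectrum_im_zero (A B : H →L[ℂ] H) (hA : A.IsPositive) (hB : IsSelfAdjoint B) :
    ∀ z ∈ spectrum ℂ (A * B), z.im = 0 := by
  intro z hz
  have hA0 : (0 : H →L[ℂ] H) ≤ A := (ContinuousLinearMap.nonneg_iff_isPositive A).mpr hA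
  set C : H →L[ℂ] H := CFC.sqrt A with hCdef
  have hCC : C * C = A := CFC.sqrt_mul_sqrt_self A hA0
  have hCsa : IsSelfAdjoint C := IsSelfAdjoint.of_nonneg (CFC.sqrt_nonneg A)
  have hSsa : IsSelfAdjoint (C * B * C) := by
    rw [IsSelfAdjoint, star_mul, star_mul, hCsa.star_eq, hB.star_eq, mul_assoc]
  rcases eq_or_ne z 0 with h0 | h0
  · rw [h0]; rfl
  · have hz' : z ∈ spectrum ℂ (C * (C * B)) \ {0} := by
      rw [← mul_assoc, hCC]
      exact ⟨hz, h0⟩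
    rw [spectrum.nonzero_mul_comm] at hz'
    have : z ∈ spectrum ℂ (C * B * C) := by
      have := hz'.1
      rwa [mul_assoc] at this
    exact hSsa.im_eq_zero_of_mem_spectrum this

theorem stmt_6 (A B : H →L[ℂ] H) (hA : A.IsPositive) (hB : IsSelfAdjoint B)
    (hhyp : ∀ x : H, ‖(ContinuousLinearMap.adjoint (A * B)) x‖ ≤ ‖(A * B) x‖) :
    IsSelfAdjoint (A * B) := by
  by_cases hsub : Subsingleton H
  · rw [IsSelfAdjoint]
    ext x
    exact Subsingleton.elim _ _
  · haveI : Nontrivial H := not_subsingleton_iff_nontrivial.mp hsub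
    set T : H →L[ℂ] H := A * B with hTdef
    have hT : ∀ x, ‖(star T) x‖ ≤ ‖T x‖ := by
      intro x
      rw [star_eq_adjoint]
      exact hhyp x
    have hσ : ∀ z ∈ spectrum ℂ T, z.im = 0 := spectrum_im_zero A B hA hB
    rw [ContinuousLinearMap.isSelfAdjoint_iff_isSymmetric,
      LinearMap.isSymmetric_iff_inner_map_self_real]
    intro v
    rw [Complex.conj_eq_iff_im]
    simp only [ContinuousLinearMap.coe_coe]
    by_contra hβ
    set z : ℂ := ⟪T v, v⟫_ℂ with hzdef
    have hv : v ≠ 0 := by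
      intro h
      apply hβ
      simp [hzdef, h]
    have hv2 : (0:ℝ) < ‖v‖ := norm_pos_iff.mpr hv
    set α' : ℝ := z.re / ‖v‖ ^ 2 with hα'
    have hineq : ∀ s : ℝ, s ≠ 0 →
        s ^ 2 * ‖v‖ ^ 2 ≤ ‖T v‖ ^ 2 - 2 * (α' * z.re - s * z.im) + (α' ^ 2 + s ^ 2) * ‖v‖ ^ 2 := by
      intro s hs
      set γ : ℂ := (α' : ℂ) + s * Complex.I with hγdef
      have hγim : γ.im = s := by simp [hγdef]
      have hkey := key_resolvent T hT hσ γ (by rw [hγim]; exact hs) v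
      rw [hγim] at hkey
      have happ : (T - γ • 1) v = T v - γ • v := by simp [sub_apply, smul_apply]
      have hsq : (|s| * ‖v‖) ^ 2 ≤ ‖(T - γ • 1) v‖ ^ 2 := by
        have h1 : (0:ℝ) ≤ |s| * ‖v‖ := by positivity
        nlinarith [hkey, norm_nonneg ((T - γ • 1) v)]
      rw [happ] at hsq
      have hexp : ‖T v - γ • v‖ ^ 2
          = ‖T v‖ ^ 2 - 2 * Complex.re (γ * z) + ‖γ‖ ^ 2 * ‖v‖ ^ 2 := by
        rw [@norm_sub_sq ℂ]
        simp [inner_smul_right, norm_smul, mul_pow, hzdef]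
      have hre : Complex.re (γ * z) = α' * z.re - s * z.im := by
        rw [Complex.mul_re]
        simp [hγdef]
      have hγnorm : ‖γ‖ ^ 2 = α' ^ 2 + s ^ 2 := by
        rw [Complex.sq_norm, Complex.normSq_apply]
        simp [hγdef]
        ring
      have habs : (|s| * ‖v‖) ^ 2 = s ^ 2 * ‖v‖ ^ 2 := by
        rw [mul_pow, sq_abs]
      rw [hexp, hre, hγnorm, habs] at hsq
      linarith
    set K : ℝ := ‖T v‖ ^ 2 - 2 * α' * z.re + α' ^ 2 * ‖v‖ ^ 2 with hK
    have hK' : ∀ s : ℝ, s ≠ 0 → 0 ≤ K + 2 * s * z.im := by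
      intro s hs
      have := hineq s hs
      rw [hK]
      nlinarith [this]
    have hzim : z.im ≠ 0 := hβ
    set s₀ : ℝ := -(|K| + 1) / (2 * z.im) with hs₀
    have hs₀ne : s₀ ≠ 0 := by
      rw [hs₀]
      apply div_ne_zero
      · have : (0:ℝ) ≤ |K| := abs_nonneg _
        intro h; nlinarith [h]
      · intro h; apply hzim; linarith [h]
    have h2s : 2 * s₀ * z.im = -(|K| + 1) := by
      rw [hs₀]
      field_simp
    have := hK' s₀ hs₀ne
    rw [h2s] at this
    have : K ≤ |K| := le_abs_self K
    linarith [hK' s₀ hs₀ne, h2s, le_abs_self K]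
end

section
/- Let A be a closed densely defined operator on a complex Hilbert space with ker(A*) ⊆ ker(A). If A is left invertible (CA ⊆ I for some bounded C), then A is invertible. -/
open LinearPMap
open scoped ComplexInnerProductSpace

variable {H : Type*} [NormedAddCommGroup H] [InnerProductSpace ℂ H] [CompleteSpace H]

/-- `A` is right invertible: `A ∘ B = I` for some bounded everywhere-defined `B`. -/
def PMapRightInv (A : H →ₗ.[ℂ] H) : Prop :=
  ∃ B : H →L[ℂ] H, ∀ y : H, ∃ h : B y ∈ A.domain, A ⟨B y, h⟩ = y

/-- `A` is left invertible: `C ∘ A ⊆ I` for some bounded everywhere-defined `C`. -/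
def PMapLeftInv (A : H →ₗ.[ℂ] H) : Prop :=
  ∃ C : H →L[ℂ] H, ∀ x : A.domain, C (A x) = x

/-- `A` is invertible: `A ∘ B = I` and `B ∘ A ⊆ I` for some bounded `B`. -/
def PMapInv (A : H →ₗ.[ℂ] H) : Prop :=
  ∃ B : H →L[ℂ] H, (∀ y : H, ∃ h : B y ∈ A.domain, A ⟨B y, h⟩ = y) ∧
    ∀ x : A.domain, B (A x) = x

theorem stmt_11 (A : H →ₗ.[ℂ] H) (hclosed : A.IsClosed)
    (hdense : Dense (A.domain : Set H))
    (hker : ∀ y : A†.domain, A† y = 0 → ∃ h : (y : H) ∈ A.domain, A ⟨(y : H), h⟩ = 0)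
    (h : PMapLeftInv A) : PMapInv A := by
  obtain ⟨C, hC⟩ := h
  -- injectivity
  have hinj : ∀ x : A.domain, A x = 0 → (x : H) = 0 := by
    intro x hx
    have := hC x
    rw [hx, C.map_zero] at this
    exact this.symm
  -- range as a submodule
  set R : Submodule ℂ H := LinearMap.range A.toFun with hRdef
  have hmemR : ∀ z : H, z ∈ R ↔ ∃ x : A.domain, A x = z := by
    intro z; exact ⟨fun ⟨x, hx⟩ => ⟨x, hx⟩, fun ⟨x, hx⟩ => ⟨x, hx⟩⟩
  -- range is closed
  have hRclosed : IsClosed (R : Set H) := by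
    rw [← isSeqClosed_iff_isClosed]
    intro f z hf hfz
    have hgraph : ∀ n, (C (f n), f n) ∈ A.graph := by
      intro n
      obtain ⟨x, hx⟩ := (hmemR (f n)).mp (hf n)
      have : C (f n) = (x : H) := by rw [← hx]; exact hC x
      rw [this]
      rw [← hx]
      exact A.mem_graph x
    have htend : Filter.Tendsto (fun n => (C (f n), f n)) Filter.atTop (nhds (C z, z)) :=
      ((C.continuous.tendsto z).comp hfz).prodMk_nhds hfz
    have : (C z, z) ∈ A.graph := hclosed.mem_of_tendsto htend
      (Filter.Eventually.of_forall hgraph)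
    rw [LinearPMap.mem_graph_iff] at this
    obtain ⟨x, _, hx2⟩ := this
    exact (hmemR z).mpr ⟨x, hx2⟩
  haveI : CompleteSpace R := hRclosed.completeSpace_coe
  -- orthogonal complement of range is trivial
  have horth : Rᗮ = ⊥ := by
    rw [Submodule.eq_bot_iff]
    intro y hy
    have hy' : ∀ x : A.domain, (0 : H) = 0 ∧ (inner ℂ y (A x) : ℂ) = 0 := by
      intro x
      refine ⟨rfl, ?_⟩
      have : (inner ℂ (A x) y : ℂ) = 0 := hy (A x) ((hmemR (A x)).mpr ⟨x, rfl⟩)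
      rw [← inner_conj_symm, this, RingHom.map_zero]
    have hydom : y ∈ A†.domain := by
      apply LinearPMap.mem_adjoint_domain_of_exists
      exact ⟨0, fun x => by rw [inner_zero_left, (hy' x).2]⟩
    have hAy : A† ⟨y, hydom⟩ = 0 := by
      apply LinearPMap.adjoint_apply_eq hdense
      intro x
      rw [inner_zero_left, (hy' x).2]
    obtain ⟨hmem, hzero⟩ := hker ⟨y, hydom⟩ hAy
    exact hinj ⟨y, hmem⟩ hzero
  -- surjectivity
  have hsurj : ∀ z : H, ∃ x : A.domain, A x = z := by
    intro z
    have : R = ⊤ := (Submodule.orthogonal_eq_bot_iff).mp horth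
    exact (hmemR z).mp (this ▸ Submodule.mem_top)
  -- conclude
  refine ⟨C, fun y => ?_, hC⟩
  obtain ⟨x, hx⟩ := hsurj y
  have e : C y = (x : H) := by rw [← hx]; exact hC x
  refine ⟨e ▸ x.2, ?_⟩
  have : (⟨C y, e ▸ x.2⟩ : A.domain) = x := Subtype.ext e
  rw [this, hx]
end

section
/- Let A be a closed densely defined operator with ker(A) = ker(A*). Then the following are equivalent: A is left invertible; A is right invertible; A is invertible. -/
open LinearPMap

variable {H : Type*} [NormedAddCommGroup H] [InnerProductSpace ℂ H] [CompleteSpace H]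

/-- Right invertibility implies invertibility (with the same `B`), using that
`ker A† = 0` (surjectivity) implies `ker A = 0` via the kernel hypothesis. -/
lemma pmapRightInv_to_inv (A : H →ₗ.[ℂ] H)
    (hdense : Dense (A.domain : Set H))
    (hker1 : ∀ x : A.domain, A x = 0 → ∃ h : (x : H) ∈ A†.domain, A† ⟨(x : H), h⟩ = 0) :
    PMapRightInv A → PMapInv A := by
  rintro ⟨B, hB⟩
  have hadj := LinearPMap.adjoint_isFormalAdjoint hdense
  -- ker A† = 0
  have hkerAdj : ∀ y : A†.domain, A† y = 0 → (y : H) = 0 := by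
    intro y hy
    have h1 : ∀ z : H, (inner ℂ (y : H) z : ℂ) = 0 := by
      intro z
      obtain ⟨h, hz⟩ := hB z
      calc (inner ℂ (y : H) z : ℂ) = inner ℂ (y : H) (A ⟨B z, h⟩) := by rw [hz]
      _ = inner ℂ (A† y) ((⟨B z, h⟩ : A.domain) : H) := (hadj y ⟨B z, h⟩).symm
      _ = 0 := by rw [hy, inner_zero_left]
    have := h1 (y : H)
    exact inner_self_eq_zero.mp this
  -- ker A = 0
  have hkerA : ∀ x : A.domain, A x = 0 → (x : H) = 0 := by
    intro x hx
    obtain ⟨h, hx'⟩ := hker1 x hx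
    exact hkerAdj ⟨(x : H), h⟩ hx'
  -- A is injective on its domain
  have hinj : ∀ x₁ x₂ : A.domain, A x₁ = A x₂ → x₁ = x₂ := by
    intro x₁ x₂ hx
    have : A (x₁ - x₂) = 0 := by rw [LinearPMap.map_sub, hx, sub_self]
    have := hkerA _ this
    ext
    simpa [sub_eq_zero] using this
  refine ⟨B, hB, fun x => ?_⟩
  obtain ⟨h, hx⟩ := hB (A x)
  have : (⟨B (A x), h⟩ : A.domain) = x := hinj _ _ hx
  exact congrArg Subtype.val this

/-- Left invertibility implies invertibility (with the same `C`). -/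
lemma pmapLeftInv_to_inv (A : H →ₗ.[ℂ] H) (hclosed : A.IsClosed)
    (hdense : Dense (A.domain : Set H))
    (hker2 : ∀ y : A†.domain, A† y = 0 → ∃ h : (y : H) ∈ A.domain, A ⟨(y : H), h⟩ = 0) :
    PMapLeftInv A → PMapInv A := by
  rintro ⟨C, hC⟩
  -- the range of A
  set S : Submodule ℂ H := LinearMap.range A.toFun with hS
  -- S is closed
  have hSclosed : IsClosed (S : Set H) := by
    rw [← isSeqClosed_iff_isClosed]
    intro u y hu huy
    -- pick preimages
    choose x hx using hu
    -- the x sequence is Cauchy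
    have hxc : CauchySeq (fun n => ((x n : A.domain) : H)) := by
      have huc : CauchySeq u := huy.cauchySeq
      rw [Metric.cauchySeq_iff] at huc ⊢
      intro ε hε
      rcases eq_or_ne ‖C‖ 0 with hC0 | hC0
      · refine ⟨0, fun m _ n _ => ?_⟩
        have h1 : ∀ k, ((x k : A.domain) : H) = C (u k) := by
          intro k
          rw [← hx k]
          exact (hC (x k)).symm
        rw [h1 m, h1 n, dist_eq_norm, ← C.map_sub]
        calc ‖C (u m - u n)‖ ≤ ‖C‖ * ‖u m - u n‖ := C.le_opNorm _
          _ = 0 := by rw [hC0, zero_mul]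
          _ < ε := hε
      · have hCpos : (0 : ℝ) < ‖C‖ := lt_of_le_of_ne (norm_nonneg _) (Ne.symm hC0)
        obtain ⟨N, hN⟩ := huc (ε / ‖C‖) (div_pos hε hCpos)
        refine ⟨N, fun m hm n hn => ?_⟩
        have h1 : ∀ k, ((x k : A.domain) : H) = C (u k) := by
          intro k
          rw [← hx k]
          exact (hC (x k)).symm
        rw [h1 m, h1 n, dist_eq_norm, ← C.map_sub]
        calc ‖C (u m - u n)‖ ≤ ‖C‖ * ‖u m - u n‖ := C.le_opNorm _
          _ = ‖C‖ * dist (u m) (u n) := by rw [dist_eq_norm]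
          _ < ‖C‖ * (ε / ‖C‖) := by
              exact mul_lt_mul_of_pos_left (hN m hm n hn) hCpos
          _ = ε := by field_simp
    obtain ⟨z, hz⟩ := cauchySeq_tendsto_of_complete hxc
    -- use closedness of the graph
    have hgraph : ∀ n, (((x n : A.domain) : H), u n) ∈ A.graph := by
      intro n
      rw [← hx n]
      exact A.mem_graph (x n)
    have hconv : Filter.Tendsto (fun n => (((x n : A.domain) : H), u n))
        Filter.atTop (nhds (z, y)) := hz.prodMk_nhds huy
    have hmem : (z, y) ∈ A.graph :=
      hclosed.mem_of_tendsto hconv (Filter.Eventually.of_forall hgraph)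
    rw [LinearPMap.mem_graph_iff] at hmem
    obtain ⟨w, _, hw2⟩ := hmem
    exact ⟨w, (A.toFun_eq_coe w).trans hw2⟩
  -- Sᗮ = ⊥
  have hSorth : Sᗮ = ⊥ := by
    rw [Submodule.eq_bot_iff]
    intro z hz
    rw [Submodule.mem_orthogonal] at hz
    have hz' : ∀ x : A.domain, (inner ℂ z (A x) : ℂ) = 0 := by
      intro x
      have hm : (A x : H) ∈ S := ⟨x, rfl⟩
      have h0 := hz (A x) hm
      rw [← inner_conj_symm, h0]; simp
    have hzadj : z ∈ A†.domain := by
      apply LinearPMap.mem_adjoint_domain_of_exists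
      exact ⟨0, fun x => by rw [inner_zero_left, hz' x]⟩
    have hzero : A† ⟨z, hzadj⟩ = 0 := by
      apply LinearPMap.adjoint_apply_eq hdense
      intro x
      rw [inner_zero_left]
      exact (hz' x).symm
    obtain ⟨h, hA⟩ := hker2 ⟨z, hzadj⟩ hzero
    have : C (A ⟨z, h⟩) = z := hC ⟨z, h⟩
    rw [hA, C.map_zero] at this
    exact this.symm
  -- S = ⊤
  haveI : CompleteSpace S := hSclosed.completeSpace_coe
  have hStop : S = ⊤ := by
    have := Submodule.orthogonal_orthogonal S
    rw [hSorth, Submodule.bot_orthogonal_eq_top] at this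
    exact this.symm
  -- conclude
  have hsurj : ∀ y : H, ∃ x : A.domain, A x = y := by
    intro y
    have : y ∈ S := hStop ▸ Submodule.mem_top
    exact this
  refine ⟨C, fun y => ?_, hC⟩
  obtain ⟨x, hxy⟩ := hsurj y
  have hCy : C y = (x : H) := by rw [← hxy]; exact hC x
  refine ⟨hCy ▸ x.2, ?_⟩
  have : (⟨C y, hCy ▸ x.2⟩ : A.domain) = x := Subtype.ext hCy
  rw [this, hxy]

theorem stmt_12 (A : H →ₗ.[ℂ] H) (hclosed : A.IsClosed)
    (hdense : Dense (A.domain : Set H))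
    (hker1 : ∀ x : A.domain, A x = 0 → ∃ h : (x : H) ∈ A†.domain, A† ⟨(x : H), h⟩ = 0)
    (hker2 : ∀ y : A†.domain, A† y = 0 → ∃ h : (y : H) ∈ A.domain, A ⟨(y : H), h⟩ = 0) :
    (PMapLeftInv A ↔ PMapRightInv A) ∧ (PMapRightInv A ↔ PMapInv A) := by
  have h1 : PMapRightInv A → PMapInv A := pmapRightInv_to_inv A hdense hker1
  have h2 : PMapLeftInv A → PMapInv A := pmapLeftInv_to_inv A hclosed hdense hker2
  have h3 : PMapInv A → PMapRightInv A := fun ⟨B, hB, _⟩ => ⟨B, hB⟩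
  have h4 : PMapInv A → PMapLeftInv A := fun ⟨B, _, hB⟩ => ⟨B, hB⟩
  exact ⟨⟨fun h => h3 (h2 h), fun h => h4 (h1 h)⟩, ⟨h1, h3⟩⟩
end

section
/- A right invertible closed hyponormal operator is invertible. -/
open LinearPMap

variable {H : Type*} [NormedAddCommGroup H] [InnerProductSpace ℂ H] [CompleteSpace H]

theorem stmt_13 (A : H →ₗ.[ℂ] H) (hclosed : A.IsClosed)
    (hdense : Dense (A.domain : Set H))
    (hsub : ∀ x : A.domain, (x : H) ∈ A†.domain)
    (hhyp : ∀ x : A.domain, ‖A† ⟨(x : H), hsub x⟩‖ ≤ ‖A x‖)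
    (h : PMapRightInv A) : PMapInv A := by
  obtain ⟨B, hB⟩ := h
  -- injectivity of A
  have hinj : ∀ x : A.domain, A x = 0 → (x : H) = 0 := by
    intro x hx
    have hAd : A† ⟨(x : H), hsub x⟩ = 0 := by
      have := hhyp x
      rw [hx, norm_zero] at this
      exact norm_le_zero_iff.mp this
    have formal := A.adjoint_isFormalAdjoint hdense
    -- ⟪x, y⟫ = 0 for all y, using surjectivity
    have hz : ∀ y : H, inner ℂ (x : H) y = (0 : ℂ) := by
      intro y
      obtain ⟨hy, hAy⟩ := hB y
      have := formal ⟨(x : H), hsub x⟩ ⟨B y, hy⟩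
      rw [hAd, hAy] at this
      simpa using this.symm
    have := hz (x : H)
    rwa [inner_self_eq_zero] at this
  refine ⟨B, hB, fun x => ?_⟩
  obtain ⟨hy, hAy⟩ := hB (A x)
  have : A (⟨B (A x), hy⟩ - x) = 0 := by
    rw [LinearPMap.map_sub, hAy, sub_self]
  have h0 := hinj _ this
  have : B (A x) - (x : H) = 0 := h0
  exact sub_eq_zero.mp this
end
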